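/- In 𝔤𝔩(3,ℂ), identify the dual of the nilradical 𝔫 of upper-triangular matrices with the space of strictly lower-triangular matrices with entries a (position (2,1)), c (position (3,2)), b (position (3,1)) via the trace form. Let 𝔰 be the space of complex symmetric 3×3 matrices and ℛ the variety of nilpotent matrices of rank ≤ 1. Then the projection of ℛ ∩ 𝔰 to 𝔫* is the hypersurface {a²b² + a²c² + b²c² = 0}, while ℛ ∩ 𝔫̄ (𝔫̄ = strictly lower triangular matrices) is {ac = 0}. -/

import Mathlib

open Matrix

private lemma rank_le_one_of_sq_zero (X : Matrix (Fin 3) (Fin 3) ℂ) (h : X * X = 0) :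
    X.rank ≤ 1 := by
  have := Matrix.rank_add_rank_le_card_of_mul_eq_zero h
  simp only [Fintype.card_fin] at this
  omega

private lemma exists_sqrt (z : ℂ) : ∃ w : ℂ, w ^ 2 = z :=
  IsAlgClosed.exists_pow_nat_eq z (by norm_num)

private lemma exists_iso (z : ℂ) : ∃ u v : ℂ, u * v = z ∧ u ^ 2 + v ^ 2 = 0 := by
  obtain ⟨w, hw⟩ := exists_sqrt (-Complex.I * z)
  refine ⟨Complex.I * w, w, ?_, ?_⟩
  · linear_combination Complex.I * hw - z * Complex.I_sq
  · linear_combination w ^ 2 * Complex.I_sq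

private lemma exists_v (A B C : ℂ)
    (hT : A ^ 2 * B ^ 2 + A ^ 2 * C ^ 2 + B ^ 2 * C ^ 2 = 0) :
    ∃ v0 v1 v2 : ℂ, v0 * v1 = A ∧ v2 * v0 = B ∧ v2 * v1 = C ∧
      v0 ^ 2 + v1 ^ 2 + v2 ^ 2 = 0 := by
  by_cases hA : A = 0
  · subst hA
    have hBC : B = 0 ∨ C = 0 := by
      have h2 : (B * C) ^ 2 = 0 := by linear_combination hT
      exact mul_eq_zero.mp (pow_eq_zero_iff two_ne_zero |>.mp h2)
    rcases hBC with hB | hC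
    · subst hB
      obtain ⟨u, v, huv, hsum⟩ := exists_iso C
      exact ⟨0, v, u, by ring, by ring, huv, by linear_combination hsum⟩
    · subst hC
      obtain ⟨u, v, huv, hsum⟩ := exists_iso B
      exact ⟨v, 0, u, by ring, by linear_combination huv, by ring,
        by linear_combination hsum⟩
  · by_cases hB : B = 0
    · subst hB
      have hC : C = 0 := by
        have h2 : (A * C) ^ 2 = 0 := by linear_combination hT
        rcases mul_eq_zero.mp (pow_eq_zero_iff two_ne_zero |>.mp h2) with h | h
        · exact absurd h hA
        · exact h
      subst hC
      obtain ⟨u, v, huv, hsum⟩ := exists_iso A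
      exact ⟨u, v, 0, huv, by ring, by ring, by linear_combination hsum⟩
    · by_cases hC : C = 0
      · exfalso
        subst hC
        have h2 : (A * B) ^ 2 = 0 := by linear_combination hT
        rcases mul_eq_zero.mp (pow_eq_zero_iff two_ne_zero |>.mp h2) with h | h
        · exact hA h
        · exact hB h
      · obtain ⟨t, ht⟩ := exists_sqrt (A * B * C)
        refine ⟨t / C, t / B, t / A, ?_, ?_, ?_, ?_⟩
        · field_simp
          linear_combination ht
        · field_simp
          linear_combination ht
        · field_simp
          linear_combination ht
        · field_simp
          linear_combination (A ^ 2 * B ^ 2 + A ^ 2 * C ^ 2 + B ^ 2 * C ^ 2) * ht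
            + A * B * C * hT

theorem rank_one_nilpotent_projections :
    ({q : ℂ × ℂ × ℂ | ∃ X : Matrix (Fin 3) (Fin 3) ℂ,
        X.rank ≤ 1 ∧ X * X = 0 ∧ Xᵀ = X ∧
        X 1 0 = q.1 ∧ X 2 0 = q.2.1 ∧ X 2 1 = q.2.2}
      = {q : ℂ × ℂ × ℂ |
          q.1 ^ 2 * q.2.1 ^ 2 + q.1 ^ 2 * q.2.2 ^ 2 + q.2.1 ^ 2 * q.2.2 ^ 2 = 0}) ∧
    (∀ X : Matrix (Fin 3) (Fin 3) ℂ, (∀ i j : Fin 3, i ≤ j → X i j = 0) →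
      ((X.rank ≤ 1 ∧ X * X = 0) ↔ X 1 0 * X 2 1 = 0)) := by
  constructor
  · ext ⟨A, B, C⟩
    simp only [Set.mem_setOf_eq]
    constructor
    · rintro ⟨X, -, h2, hs, ha, hb, hc⟩
      have s01 : X 0 1 = X 1 0 := congrFun (congrFun hs 1) 0
      have s02 : X 0 2 = X 2 0 := congrFun (congrFun hs 2) 0
      have s12 : X 1 2 = X 2 1 := congrFun (congrFun hs 2) 1
      have e11 := congrFun (congrFun h2 1) 1
      have e12 := congrFun (congrFun h2 1) 2
      have e22 := congrFun (congrFun h2 2) 2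
      simp only [Matrix.mul_apply, Fin.sum_univ_three, Matrix.zero_apply] at e11 e12 e22
      rw [s01, s12, ha, hc] at e11
      rw [s02, s12, ha, hb, hc] at e12
      rw [s02, s12, hb, hc] at e22
      set q := X 1 1
      set r := X 2 2
      have hsq : (A ^ 2 * B ^ 2 + A ^ 2 * C ^ 2 + B ^ 2 * C ^ 2) ^ 2 = 0 := by
        linear_combination
          (A^2*B^2*C^2 - 2*r*A*B*C^3 + 3*r^2*C^4 + A^2*C^4 + 2*B^2*C^4 + 3*C^6) * e11
          + (A^3*B^3 - q*A^2*B^2*C - r*A^2*B^2*C + 2*q*r*A*B*C^2 + r^2*A*B*C^2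
              + A^3*B*C^2 + 2*A*B^3*C^2 - 3*q*r^2*C^3 - r^3*C^3 - q*A^2*C^3 + r*A^2*C^3
              - 2*q*B^2*C^3 - 2*r*B^2*C^3 + 3*A*B*C^4 - 3*q*C^5 - r*C^5) * e12
          + (4*q*r*C^4 + r^2*C^4 - 4*A^2*C^4 + B^2*C^4 - 3*C^6) * e22
      exact pow_eq_zero_iff two_ne_zero |>.mp hsq
    · rintro hT
      obtain ⟨v0, v1, v2, h01, h20, h21, hv⟩ := exists_v A B C hT
      have hXX : (Matrix.of fun i j => ![v0, v1, v2] i * ![v0, v1, v2] j) *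
          (Matrix.of fun i j => ![v0, v1, v2] i * ![v0, v1, v2] j) = 0 := by
        ext i j
        simp only [Matrix.mul_apply, Fin.sum_univ_three, Matrix.of_apply,
          Matrix.zero_apply, Matrix.cons_val_zero, Matrix.cons_val_one,
          Matrix.head_cons, Matrix.cons_val_two, Matrix.tail_cons]
        linear_combination (![v0, v1, v2] i * ![v0, v1, v2] j) * hv
      refine ⟨_, rank_le_one_of_sq_zero _ hXX, hXX, ?_, ?_, ?_, ?_⟩
      · ext i j
        simp only [Matrix.transpose_apply, Matrix.of_apply]
        ring
      · simp only [Matrix.of_apply, Matrix.cons_val_zero, Matrix.cons_val_one,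
          Matrix.head_cons]
        linear_combination h01
      · simp only [Matrix.of_apply, Matrix.cons_val_zero, Matrix.cons_val_two,
          Matrix.tail_cons, Matrix.head_cons]
        linear_combination h20
      · simp only [Matrix.of_apply, Matrix.cons_val_one, Matrix.cons_val_two,
          Matrix.tail_cons, Matrix.head_cons, Matrix.cons_val_zero]
        linear_combination h21
  · intro X hX
    constructor
    · rintro ⟨-, hXX⟩
      have h20 := congrFun (congrFun hXX 2) 0
      simp only [Matrix.mul_apply, Fin.sum_univ_three, Matrix.zero_apply] at h20
      rw [hX 0 0 le_rfl, hX 2 2 le_rfl] at h20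
      linear_combination h20
    · intro hac
      have hXX : X * X = 0 := by
        ext i j
        fin_cases i <;> fin_cases j <;>
          simp [Matrix.mul_apply, Fin.sum_univ_three,
            hX 0 0 (by decide), hX 0 1 (by decide), hX 0 2 (by decide),
            hX 1 1 (by decide), hX 1 2 (by decide), hX 2 2 (by decide)] <;>
          exact mul_eq_zero.mp (by linear_combination hac)
      exact ⟨rank_le_one_of_sq_zero _ hXX, hXX⟩
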